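/- Under the same setting, the function G(λ) = λ − ∫ l (f − λ)_− + ∫ u (f − λ)_+ has one-sided derivatives, and the quantity 1 − ∫ l(ξ) 1{f(ξ) < λ} dξ − ∫ u(ξ) 1{f(ξ) ≥ λ} dξ is a subgradient of G at λ (i.e., G(λ') ≥ G(λ) + (1 − ∫ l·1{f<λ} − ∫ u·1{f≥λ})(λ' − λ) for all λ'). -/
import Mathlib

open MeasureTheory

private lemma ptwise (lv uv fv lam lam' : ℝ) (_h0 : 0 ≤ lv) (hlu : lv ≤ uv) :
    uv * max (fv - lam) 0 - lv * max (lam - fv) 0 + (if fv < lam then lv else uv) * (lam - lam')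
      ≤ uv * max (fv - lam') 0 - lv * max (lam' - fv) 0 := by
  rcases lt_or_ge fv lam with h | h
  · rw [if_pos h, max_eq_right (by linarith : fv - lam ≤ 0),
      max_eq_left (by linarith : (0:ℝ) ≤ lam - fv)]
    rcases le_or_gt fv lam' with h' | h'
    · rw [max_eq_right (by linarith : fv - lam' ≤ 0),
        max_eq_left (by linarith : (0:ℝ) ≤ lam' - fv)]
      nlinarith
    · rw [max_eq_left (by linarith : (0:ℝ) ≤ fv - lam'),
        max_eq_right (by linarith : lam' - fv ≤ 0)]
      nlinarith
  · rw [if_neg (not_lt.mpr h), max_eq_left (by linarith : (0:ℝ) ≤ fv - lam),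
      max_eq_right (by linarith : lam - fv ≤ 0)]
    rcases le_or_gt fv lam' with h' | h'
    · rw [max_eq_right (by linarith : fv - lam' ≤ 0),
        max_eq_left (by linarith : (0:ℝ) ≤ lam' - fv)]
      nlinarith
    · rw [max_eq_left (by linarith : (0:ℝ) ≤ fv - lam'),
        max_eq_right (by linarith : lam' - fv ≤ 0)]
      nlinarith

/-- The quantity `1 − ∫ l·1{f<λ} − ∫ u·1{f≥λ}` is a subgradient at `λ`
of the dual objective `G(λ) = λ − ∫ l (f − λ)₋ + ∫ u (f − λ)₊`. -/
theorem dual_objective_subgradient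
    {m : ℕ} (μ : Measure (EuclideanSpace ℝ (Fin m)))
    (f l u : EuclideanSpace ℝ (Fin m) → ℝ) (lam : ℝ)
    (hf : Measurable f) (hl : Measurable l) (hu : Measurable u)
    (hl0 : ∀ ξ, 0 ≤ l ξ) (hlu : ∀ ξ, l ξ ≤ u ξ)
    (hfu : Integrable (fun ξ => |f ξ| * u ξ) μ)
    (hu_int : Integrable u μ)
    (G : ℝ → ℝ)
    (hG : G = fun t : ℝ =>
      t - ∫ ξ, l ξ * max (t - f ξ) 0 ∂μ + ∫ ξ, u ξ * max (f ξ - t) 0 ∂μ) :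
    ∀ lam' : ℝ,
      G lam + (1 - (∫ ξ in {ξ | f ξ < lam}, l ξ ∂μ) -
          ∫ ξ in {ξ | lam ≤ f ξ}, u ξ ∂μ) * (lam' - lam) ≤ G lam' := by
  intro lam'
  have hu0 : ∀ ξ, 0 ≤ u ξ := fun ξ => le_trans (hl0 ξ) (hlu ξ)
  -- dominating integrable function
  have hdom : ∀ t : ℝ, Integrable (fun ξ => |f ξ| * u ξ + |t| * u ξ) μ :=
    fun t => hfu.add (hu_int.const_mul _)
  -- integrability of u * max (f - t) 0
  have hintu : ∀ t : ℝ, Integrable (fun ξ => u ξ * max (f ξ - t) 0) μ := by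
    intro t
    refine (hdom t).mono ((hu.mul ((hf.sub measurable_const).max measurable_const)).aestronglyMeasurable) ?_
    filter_upwards with ξ
    have h1 : max (f ξ - t) 0 ≤ |f ξ| + |t| := by
      rcases le_total (f ξ - t) 0 with h | h
      · rw [max_eq_right h]; positivity
      · rw [max_eq_left h]
        have := abs_le.mp (le_refl |f ξ|)
        have := neg_abs_le (f ξ); have := le_abs_self (f ξ)
        have := neg_abs_le t; have := le_abs_self t
        linarith
    have h2 : (0:ℝ) ≤ max (f ξ - t) 0 := le_max_right _ _
    simp only [Real.norm_eq_abs]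
    rw [abs_of_nonneg (mul_nonneg (hu0 ξ) h2),
      abs_of_nonneg (add_nonneg (mul_nonneg (abs_nonneg _) (hu0 ξ)) (mul_nonneg (abs_nonneg _) (hu0 ξ)))]
    nlinarith [hu0 ξ]
  -- integrability of l * max (t - f) 0
  have hintl : ∀ t : ℝ, Integrable (fun ξ => l ξ * max (t - f ξ) 0) μ := by
    intro t
    refine (hdom t).mono ((hl.mul ((measurable_const.sub hf).max measurable_const)).aestronglyMeasurable) ?_
    filter_upwards with ξ
    have h1 : max (t - f ξ) 0 ≤ |f ξ| + |t| := by
      rcases le_total (t - f ξ) 0 with h | h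
      · rw [max_eq_right h]; positivity
      · rw [max_eq_left h]
        have := neg_abs_le (f ξ); have := le_abs_self (f ξ)
        have := neg_abs_le t; have := le_abs_self t
        linarith
    have h2 : (0:ℝ) ≤ max (t - f ξ) 0 := le_max_right _ _
    simp only [Real.norm_eq_abs]
    rw [abs_of_nonneg (mul_nonneg (hl0 ξ) h2),
      abs_of_nonneg (add_nonneg (mul_nonneg (abs_nonneg _) (hu0 ξ)) (mul_nonneg (abs_nonneg _) (hu0 ξ)))]
    nlinarith [hl0 ξ, hlu ξ, hu0 ξ]
  -- the "selection" σ
  set σ : EuclideanSpace ℝ (Fin m) → ℝ := fun ξ => if f ξ < lam then l ξ else u ξ with hσdef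
  have hσmeas : Measurable σ := Measurable.ite (measurableSet_lt hf measurable_const) hl hu
  have hσint : Integrable σ μ := by
    refine hu_int.mono hσmeas.aestronglyMeasurable ?_
    filter_upwards with ξ
    simp only [Real.norm_eq_abs, hσdef]
    split_ifs with h
    · rw [abs_of_nonneg (hl0 ξ)]; exact le_trans (hlu ξ) (le_abs_self _)
    · exact le_refl _
  have hA : MeasurableSet {ξ | f ξ < lam} := measurableSet_lt hf measurable_const
  have hcompl : {ξ : EuclideanSpace ℝ (Fin m) | lam ≤ f ξ} = {ξ | f ξ < lam}ᶜ := by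
    ext ξ; simp [not_lt]
  -- ∫ σ = ∫_{f<lam} l + ∫_{lam≤f} u
  have hσsplit : ∫ ξ, σ ξ ∂μ =
      (∫ ξ in {ξ | f ξ < lam}, l ξ ∂μ) + ∫ ξ in {ξ | lam ≤ f ξ}, u ξ ∂μ := by
    rw [hcompl, ← integral_add_compl hA hσint]
    congr 1
    · exact setIntegral_congr_fun hA (fun ξ hξ => if_pos hξ)
    · exact setIntegral_congr_fun hA.compl (fun ξ hξ => if_neg (by simpa using hξ))
  -- key pointwise inequality integrated
  have key : ∫ ξ, (u ξ * max (f ξ - lam) 0 - l ξ * max (lam - f ξ) 0 + σ ξ * (lam - lam')) ∂μ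
      ≤ ∫ ξ, (u ξ * max (f ξ - lam') 0 - l ξ * max (lam' - f ξ) 0) ∂μ := by
    refine integral_mono (((hintu lam).sub (hintl lam)).add (hσint.mul_const _))
      ((hintu lam').sub (hintl lam')) ?_
    intro ξ
    exact ptwise (l ξ) (u ξ) (f ξ) lam lam' (hl0 ξ) (hlu ξ)
  rw [integral_add (f := fun ξ => u ξ * max (f ξ - lam) 0 - l ξ * max (lam - f ξ) 0)
      (g := fun ξ => σ ξ * (lam - lam')) ((hintu lam).sub (hintl lam)) (hσint.mul_const _),
    integral_sub (hintu lam) (hintl lam), integral_sub (hintu lam') (hintl lam'),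
    integral_mul_const, hσsplit] at key
  subst hG
  simp only
  nlinarith [key]
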